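/- arXiv:1003.1997 — 2 statements merged into one kernel-verified Lean document; each statement's English description precedes it below -/
import Mathlib

section
/- Let p be a prime, g a primitive root modulo p, and a an integer with gcd(a,p)=1. If v is an integer with g^v ≡ a (mod p) and x is any positive integer with x ≡ p·v − (p−1)·g (mod p(p−1)), then x^x ≡ a (mod p). In particular, without the restriction 1 ≤ x ≤ p−1, the congruence x^x ≡ a (mod p) always has solutions. -/
theorem exists_solution_without_range_restriction
    (p : ℕ) (hp : p.Prime) (g v : ℕ) (a : ℤ)
    (hg : IsPrimitiveRoot (g : ZMod p) (p - 1))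
    (ha : IsCoprime a (p : ℤ))
    (hv : (g : ℤ) ^ v ≡ a [ZMOD (p : ℕ)])
    (x : ℕ) (hx : 0 < x)
    (hxc : (x : ℤ) ≡ (p : ℤ) * v - ((p : ℤ) - 1) * g [ZMOD (p * (p - 1) : ℕ)]) :
    (x : ℤ) ^ x ≡ a [ZMOD (p : ℕ)] := by
  have hp2 : 2 ≤ p := hp.two_le
  have hmod : ((p * (p - 1) : ℕ) : ℤ) = (p : ℤ) * ((p : ℤ) - 1) := by
    push_cast [Nat.cast_sub (by omega : 1 ≤ p)]; ring
  -- x ≡ g [ZMOD p]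
  have hp0 : (p : ℤ) ≡ 0 [ZMOD (p : ℕ)] := Int.modEq_zero_iff_dvd.mpr dvd_rfl
  have h1 : (x : ℤ) ≡ (g : ℤ) [ZMOD (p : ℕ)] := by
    have hd : ((p : ℕ) : ℤ) ∣ ((p * (p - 1) : ℕ) : ℤ) := by
      rw [hmod]; exact Dvd.intro _ rfl
    calc (x : ℤ) ≡ (p : ℤ) * v - ((p : ℤ) - 1) * g [ZMOD (p : ℕ)] := hxc.of_dvd hd
      _ ≡ 0 * v - (0 - 1) * g [ZMOD (p : ℕ)] :=
          (hp0.mul_right _).sub ((hp0.sub_right 1).mul_right _)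
      _ = (g : ℤ) := by ring
  -- x ≡ v [ZMOD p-1]
  have hq1 : (p : ℤ) ≡ 1 [ZMOD ((p - 1 : ℕ) : ℤ)] := by
    have : ((p - 1 : ℕ) : ℤ) = (p : ℤ) - 1 := by
      push_cast [Nat.cast_sub (by omega : 1 ≤ p)]; ring
    rw [Int.modEq_comm, Int.modEq_iff_dvd, this]
  have h2 : (x : ℤ) ≡ (v : ℤ) [ZMOD ((p - 1 : ℕ) : ℤ)] := by
    have hd : ((p - 1 : ℕ) : ℤ) ∣ ((p * (p - 1) : ℕ) : ℤ) := by
      exact_mod_cast Int.natCast_dvd_natCast.mpr ⟨p, Nat.mul_comm _ _⟩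
    calc (x : ℤ) ≡ (p : ℤ) * v - ((p : ℤ) - 1) * g [ZMOD _] := hxc.of_dvd hd
      _ ≡ 1 * v - (1 - 1) * g [ZMOD _] :=
          (hq1.mul_right _).sub ((hq1.sub_right 1).mul_right _)
      _ = (v : ℤ) := by ring
  have h2n : x ≡ v [MOD p - 1] := Int.natCast_modEq_iff.mp h2
  -- transfer to ZMod p
  have hxg : (x : ZMod p) = (g : ZMod p) := by
    have := (ZMod.intCast_eq_intCast_iff _ _ _).mpr h1
    push_cast at this; exact this
  have hgv : ((g : ZMod p)) ^ v = (a : ZMod p) := by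
    have := (ZMod.intCast_eq_intCast_iff _ _ _).mpr hv
    push_cast at this; exact this
  have hord : orderOf ((g : ZMod p)) = p - 1 := hg.eq_orderOf.symm
  apply (ZMod.intCast_eq_intCast_iff _ _ _).mp
  push_cast
  rw [hxg, ← pow_mod_orderOf, hord, h2n, ← hord, pow_mod_orderOf, hgv]
end

section
/- Let p be a prime, d and D positive integers with D = (p−1)/d, and let Y ⊆ {1, ..., D}. For b ∈ Z/pZ define s(b) = #{(y1, y2) ∈ Y × Y : y1·y2 ≡ b (mod p)}. Then for every b, s(b) ≤ (⌊p/d²⌋ + 1) · max_{1 ≤ z ≤ D²} τ(z), where τ denotes the number of divisors function. -/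
theorem s_b_bound
    (p : ℕ) (hp : p.Prime) (d D : ℕ) (hd : 0 < d) (hDpos : 0 < D)
    (hD : D = (p - 1) / d)
    (Y : Finset ℕ) (hY : Y ⊆ Finset.Icc 1 D)
    (s : ZMod p → ℕ)
    (hs : ∀ b, s b = ((Y ×ˢ Y).filter (fun yz => ((yz.1 * yz.2 : ℕ) : ZMod p) = b)).card)
    (b : ZMod p) :
    s b ≤ (p / d ^ 2 + 1) * (Finset.Icc 1 (D ^ 2)).sup (fun z => z.divisors.card) := by
  haveI : NeZero p := ⟨hp.pos.ne'⟩
  rw [hs]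
  set S := (Y ×ˢ Y).filter (fun yz => ((yz.1 * yz.2 : ℕ) : ZMod p) = b) with hS
  set M := (Finset.Icc 1 (D ^ 2)).sup (fun z => z.divisors.card) with hM
  set T := (Finset.Icc 1 (D ^ 2)).filter (fun z => ((z : ℕ) : ZMod p) = b) with hT
  -- facts about members of S
  have hmem : ∀ yz ∈ S, yz.1 ∈ Finset.Icc 1 D ∧ yz.2 ∈ Finset.Icc 1 D ∧
      ((yz.1 * yz.2 : ℕ) : ZMod p) = b := by
    intro yz hyz
    rw [hS, Finset.mem_filter, Finset.mem_product] at hyz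
    exact ⟨hY hyz.1.1, hY hyz.1.2, hyz.2⟩
  have himg : S.image (fun yz => yz.1 * yz.2) ⊆ T := by
    intro z hz
    rw [Finset.mem_image] at hz
    obtain ⟨yz, hyz, rfl⟩ := hz
    obtain ⟨h1, h2, h3⟩ := hmem yz hyz
    rw [Finset.mem_Icc] at h1 h2
    rw [hT, Finset.mem_filter, Finset.mem_Icc]
    refine ⟨⟨Nat.one_le_iff_ne_zero.2 (Nat.mul_ne_zero (by omega) (by omega)), ?_⟩, h3⟩
    calc yz.1 * yz.2 ≤ D * D := Nat.mul_le_mul h1.2 h2.2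
    _ = D ^ 2 := (sq D).symm
  -- fiber bound
  have hfiber : ∀ z ∈ S.image (fun yz => yz.1 * yz.2),
      (S.filter (fun yz => yz.1 * yz.2 = z)).card ≤ M := by
    intro z hz
    have hzT := himg hz
    rw [hT, Finset.mem_filter, Finset.mem_Icc] at hzT
    have hcard : (S.filter (fun yz => yz.1 * yz.2 = z)).card ≤ z.divisors.card := by
      apply Finset.card_le_card_of_injOn Prod.fst
      · intro yz hyz
        rw [Finset.mem_coe, Finset.mem_filter] at hyz
        obtain ⟨h1, h2, -⟩ := hmem yz hyz.1
        rw [Finset.mem_Icc] at h1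
        rw [Finset.mem_coe, Nat.mem_divisors]
        exact ⟨⟨yz.2, hyz.2.symm⟩, by omega⟩
      · intro a ha c hc hac
        rw [Finset.mem_coe, Finset.mem_filter] at ha hc
        obtain ⟨ha1, -, -⟩ := hmem a ha.1
        rw [Finset.mem_Icc] at ha1
        have : a.1 * a.2 = a.1 * c.2 := by rw [ha.2, ← hc.2, hac]
        have h2 : a.2 = c.2 := Nat.eq_of_mul_eq_mul_left (by omega) this
        exact Prod.ext hac h2
    exact hcard.trans (Finset.le_sup (f := fun z => z.divisors.card) (Finset.mem_Icc.2 hzT.1))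
  have h1 : S.card ≤ M * (S.image (fun yz => yz.1 * yz.2)).card :=
    Finset.card_le_mul_card_image _ M hfiber
  -- bound on T.card
  have hTcard : T.card ≤ p / d ^ 2 + 1 := by
    have hdd : d * D ≤ p - 1 := by
      rw [hD, mul_comm]; exact Nat.div_mul_le_self _ _
    have hstep : D ^ 2 / p ≤ p / d ^ 2 := by
      have hq : D ^ 2 / p * p ≤ D ^ 2 := Nat.div_mul_le_self _ _
      have h2 : D ^ 2 * d ^ 2 ≤ (p - 1) ^ 2 := by
        calc D ^ 2 * d ^ 2 = (d * D) ^ 2 := by ring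
        _ ≤ (p - 1) ^ 2 := Nat.pow_le_pow_left hdd 2
      have hp1 : (p - 1) ^ 2 < p ^ 2 := by
        have := hp.two_le; exact Nat.pow_lt_pow_left (by omega) (by norm_num)
      have : D ^ 2 / p * p * d ^ 2 < p * p := by
        calc D ^ 2 / p * p * d ^ 2 ≤ D ^ 2 * d ^ 2 := Nat.mul_le_mul_right _ hq
        _ ≤ (p - 1) ^ 2 := h2
        _ < p ^ 2 := hp1
        _ = p * p := sq p
      have hlt : D ^ 2 / p * d ^ 2 < p := by
        by_contra hcon
        push_neg at hcon
        have := Nat.mul_le_mul_right p hcon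
        nlinarith [hp.pos]
      exact Nat.le_div_iff_mul_le (by positivity) |>.2 hlt.le
    have hcard2 : T.card ≤ D ^ 2 / p + 1 := by
      have : T.card ≤ (Finset.range (D ^ 2 / p + 1)).card := by
        apply Finset.card_le_card_of_injOn (fun z => z / p)
        · intro z hz
          rw [Finset.mem_coe, hT, Finset.mem_filter, Finset.mem_Icc] at hz
          rw [Finset.mem_coe, Finset.mem_range]
          have := Nat.div_le_div_right (c := p) hz.1.2
          show z / p < D ^ 2 / p + 1
          omega
        · intro z1 hz1 z2 hz2 h12
          rw [Finset.mem_coe, hT, Finset.mem_filter] at hz1 hz2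
          have e1 : z1 % p = b.val := by
            have := congrArg ZMod.val hz1.2
            rwa [ZMod.val_natCast] at this
          have e2 : z2 % p = b.val := by
            have := congrArg ZMod.val hz2.2
            rwa [ZMod.val_natCast] at this
          have h12' : z1 / p = z2 / p := h12
          calc z1 = p * (z1 / p) + z1 % p := (Nat.div_add_mod z1 p).symm
          _ = p * (z2 / p) + z2 % p := by rw [h12', e1, e2]
          _ = z2 := Nat.div_add_mod z2 p
      simpa using this
    omega
  have h2 := Finset.card_le_card himg
  calc S.card ≤ M * (S.image (fun yz => yz.1 * yz.2)).card := h1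
  _ ≤ M * (p / d ^ 2 + 1) := Nat.mul_le_mul_left M (h2.trans hTcard)
  _ = (p / d ^ 2 + 1) * M := Nat.mul_comm _ _
end
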